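/- Let χ(π) := π(5−3π)/(3(1+π)) be the Taub–Mathews indicatrix function. Then for every π ∈ (0, 1/3): 0 < χ(π) < 1; ζ(π) := (π+1)(χ(π)−π)χ'(π) + 2χ(π)(1−χ(π)) = 8π(5−10π+9π²)/(9(1+π)²) > 0; and η(π) := (2π+1)χ(π) − π = 2π(1+2π−3π²)/(3(1+π)) > 0. Hence the Taub–Mathews equation of state fulfils both compressibility conditions H1^G and H2^G on (0, 1/3). -/

import Mathlib

noncomputable section

lemma tm_deriv (x : ℝ) (hx : 0 < x) :
    deriv (fun t : ℝ => t * (5 - 3 * t) / (3 * (1 + t))) x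
      = (5 - 6 * x - 3 * x ^ 2) / (3 * (1 + x) ^ 2) := by
  have hden : (3 : ℝ) * (1 + x) ≠ 0 := by nlinarith
  have h1 : HasDerivAt (fun t : ℝ => t * (5 - 3 * t))
      (1 * (5 - 3 * x) + x * -(3 * 1)) x :=
    (hasDerivAt_id x).mul (((hasDerivAt_id x).const_mul 3).const_sub 5)
  have h2 : HasDerivAt (fun t : ℝ => 3 * (1 + t)) (3 * (0 + 1)) x :=
    ((hasDerivAt_const x (1 : ℝ)).add (hasDerivAt_id x)).const_mul 3
  have h3 : deriv (fun t : ℝ => t * (5 - 3 * t) / (3 * (1 + t))) x = _ :=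
    (h1.div h2 hden).deriv
  rw [h3]
  field_simp
  ring

/-- The Taub–Mathews indicatrix `χ(π) = π(5−3π)/(3(1+π))` fulfils both compressibility
conditions H1^G and H2^G on the ultrarelativistic domain `(0, 1/3)`:
`0 < χ < 1`, `ζ(π) = 8π(5−10π+9π²)/(9(1+π)²) > 0` and
`η(π) = 2π(1+2π−3π²)/(3(1+π)) > 0`. -/
theorem taub_mathews_compressibility :
    ∀ π : ℝ, 0 < π → π < 1 / 3 →
      (0 < π * (5 - 3 * π) / (3 * (1 + π)) ∧ π * (5 - 3 * π) / (3 * (1 + π)) < 1)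
      ∧ ((π + 1) * (π * (5 - 3 * π) / (3 * (1 + π)) - π)
            * deriv (fun t => t * (5 - 3 * t) / (3 * (1 + t))) π
          + 2 * (π * (5 - 3 * π) / (3 * (1 + π)))
            * (1 - π * (5 - 3 * π) / (3 * (1 + π)))
        = 8 * π * (5 - 10 * π + 9 * π ^ 2) / (9 * (1 + π) ^ 2))
      ∧ 0 < 8 * π * (5 - 10 * π + 9 * π ^ 2) / (9 * (1 + π) ^ 2)
      ∧ ((2 * π + 1) * (π * (5 - 3 * π) / (3 * (1 + π))) - π
          = 2 * π * (1 + 2 * π - 3 * π ^ 2) / (3 * (1 + π)))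
      ∧ 0 < 2 * π * (1 + 2 * π - 3 * π ^ 2) / (3 * (1 + π)) := by
  intro π h0 h13
  have hden : (3 : ℝ) * (1 + π) ≠ 0 := by nlinarith
  have hd : deriv (fun t : ℝ => t * (5 - 3 * t) / (3 * (1 + t))) π
      = (5 - 6 * π - 3 * π ^ 2) / (3 * (1 + π) ^ 2) := tm_deriv π h0
  refine ⟨⟨div_pos (by nlinarith) (by nlinarith), ?_⟩, ?_,
    div_pos (by nlinarith) (by nlinarith), by field_simp; ring,
    div_pos (by nlinarith) (by nlinarith)⟩
  · rw [div_lt_one (by nlinarith)]; nlinarith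
  · rw [hd]; field_simp; ring
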